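/- (Hedberg-type inequality) Let 0 < β < α < mn, 0 < p₀ < n/α, and let f⃗ = (f₁,…,f_m) satisfy ‖f⃗‖_{M^{P⃗,p₀}} = 1. Then for every x ∈ ℝⁿ, |I_α^D(f⃗)(x)| ≲ M_β^D(f⃗)(x)^{(n−αp₀)/(n−βp₀)}. -/

import Mathlib

open MeasureTheory ENNReal

noncomputable section

variable {n : ℕ}

/-- Axis-parallel cube with lower corner `a` and side length `r` (half-open). -/
def cube (a : Fin n → ℝ) (r : ℝ) : Set (Fin n → ℝ) :=
  {y | ∀ i, a i ≤ y i ∧ y i < a i + r}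

/-- The dyadic cube `2^{-k}(m + [0,1)^n)`. -/
def dyadicCube (k : ℤ) (mv : Fin n → ℤ) : Set (Fin n → ℝ) :=
  cube (fun i => (mv i : ℝ) * (2 : ℝ) ^ (-k)) ((2 : ℝ) ^ (-k))

/-- The concentric triple `3Q` of the cube with corner `a` and side `r`. -/
def tripleCube (a : Fin n → ℝ) (r : ℝ) : Set (Fin n → ℝ) :=
  cube (fun i => a i - r) (3 * r)

/-- The Morrey norm `‖f‖_{M^{p,p₀}}`. -/
def morreyNorm (p p0 : ℝ) (f : (Fin n → ℝ) → ℝ) : ℝ≥0∞ :=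
  ⨆ (a : Fin n → ℝ) (r : ℝ) (_ : 0 < r),
    volume (cube a r) ^ (1 / p0 - 1 / p) *
      (∫⁻ x in cube a r, ENNReal.ofReal |f x| ^ p) ^ (1 / p)

/-- The product Morrey norm `‖f⃗‖_{M^{P⃗,p₀}}`. -/
def prodMorreyNorm {m : ℕ} (P : Fin m → ℝ) (p p0 : ℝ)
    (f : Fin m → (Fin n → ℝ) → ℝ) : ℝ≥0∞ :=
  ⨆ (a : Fin n → ℝ) (r : ℝ) (_ : 0 < r),
    volume (cube a r) ^ (1 / p0 - 1 / p) *
      ∏ j, (∫⁻ x in cube a r, ENNReal.ofReal |f j x| ^ P j) ^ (1 / P j)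

/-- The Radon–Morrey norm `‖g‖_{M_μ^{q,q₀}}`. -/
def radonMorreyNorm (μ : Measure (Fin n → ℝ)) (q q0 : ℝ)
    (g : (Fin n → ℝ) → ℝ≥0∞) : ℝ≥0∞ :=
  ⨆ (a : Fin n → ℝ) (r : ℝ) (_ : 0 < r),
    volume (cube a r) ^ (1 / q0 - 1 / q) * (∫⁻ x in cube a r, g x ^ q ∂μ) ^ (1 / q)

/-- The growth norm `‖μ‖_β := sup_Q μ(Q)/ℓ_Q^β`. -/
def measureGrowthNorm (μ : Measure (Fin n → ℝ)) (β : ℝ) : ℝ≥0∞ :=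
  ⨆ (a : Fin n → ℝ) (r : ℝ) (_ : 0 < r), μ (cube a r) / ENNReal.ofReal r ^ β

/-- The `m`-sublinear fractional maximal operator `𝔐_α`. -/
def fracMaximal {m : ℕ} (α : ℝ) (f : Fin m → (Fin n → ℝ) → ℝ)
    (x : Fin n → ℝ) : ℝ≥0∞ :=
  ⨆ (a : Fin n → ℝ) (r : ℝ) (_ : 0 < r) (_ : x ∈ cube a r),
    ENNReal.ofReal r ^ (α - (m : ℝ) * n) *
      ∏ j, ∫⁻ y in cube a r, ENNReal.ofReal |f j y|

/-- The dyadic `m`-sublinear fractional maximal operator `𝔐_α^𝒟`. -/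
def dyadicFracMaximal {m : ℕ} (α : ℝ) (f : Fin m → (Fin n → ℝ) → ℝ)
    (x : Fin n → ℝ) : ℝ≥0∞ :=
  ⨆ (k : ℤ) (mv : Fin n → ℤ) (_ : x ∈ dyadicCube k mv),
    ENNReal.ofReal ((2 : ℝ) ^ (-k)) ^ (α - (m : ℝ) * n) *
      ∏ j, ∫⁻ y in dyadicCube k mv, ENNReal.ofReal |f j y|

/-- The dyadic `m`-linear fractional integral operator `ℑ_α^𝒟`. -/
def dyadicFracIntegral {m : ℕ} (α : ℝ) (f : Fin m → (Fin n → ℝ) → ℝ)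
    (x : Fin n → ℝ) : ℝ≥0∞ :=
  ∑' qk : ℤ × (Fin n → ℤ),
    (dyadicCube qk.1 qk.2).indicator
      (fun _ => ENNReal.ofReal ((2 : ℝ) ^ (-qk.1)) ^ (α - (m : ℝ) * n) *
        ∏ j, ∫⁻ y in dyadicCube qk.1 qk.2, ENNReal.ofReal |f j y|) x

/-- The `m`-linear fractional integral operator `ℑ_α` (with Euclidean distances). -/
def fracIntegral {m : ℕ} (α : ℝ) (f : Fin m → (Fin n → ℝ) → ℝ)
    (x : Fin n → ℝ) : ℝ≥0∞ :=
  ∫⁻ y : Fin m → Fin n → ℝ,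
    (∏ j, ENNReal.ofReal |f j (y j)|) /
      ENNReal.ofReal ((∑ j, Real.sqrt (∑ i, (x i - y j i) ^ 2)) ^ ((m : ℝ) * n - α))


lemma cube_eq_pi (a : Fin n → ℝ) (r : ℝ) :
    cube a r = Set.pi Set.univ (fun i => Set.Ico (a i) (a i + r)) := by
  ext y; simp [cube, Set.mem_pi, Set.mem_Ico]

lemma volume_cube (a : Fin n → ℝ) (r : ℝ) :
    volume (cube a r) = ENNReal.ofReal r ^ n := by
  rw [cube_eq_pi, volume_pi_pi]
  simp [Real.volume_Ico]

lemma mem_dyadicCube_iff {x : Fin n → ℝ} {k : ℤ} {mv : Fin n → ℤ} :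
    x ∈ dyadicCube k mv ↔ ∀ i, mv i = ⌊x i * (2:ℝ) ^ k⌋ := by
  have h2 : (0:ℝ) < (2:ℝ) ^ k := by positivity
  have hinv : (2:ℝ) ^ (-k) * (2:ℝ) ^ k = 1 := by
    rw [← zpow_add₀ (by norm_num : (2:ℝ) ≠ 0)]; simp
  have key : ∀ (c : ℤ) (t : ℝ),
      ((c:ℝ) * (2:ℝ)^(-k) ≤ t ∧ t < (c:ℝ) * (2:ℝ)^(-k) + (2:ℝ)^(-k)) ↔
        ((c:ℝ) ≤ t * (2:ℝ)^k ∧ t * (2:ℝ)^k < (c:ℝ) + 1) := by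
    intro c t
    have hpos : (0:ℝ) < (2:ℝ)^(-k) := by positivity
    have hinv' : (2:ℝ) ^ k * (2:ℝ) ^ (-k) = 1 := by rw [mul_comm]; exact hinv
    constructor
    · rintro ⟨h1, h2'⟩
      constructor
      · calc (c:ℝ) = (c:ℝ) * ((2:ℝ)^(-k) * (2:ℝ)^k) := by rw [hinv, mul_one]
          _ = (c:ℝ) * (2:ℝ)^(-k) * (2:ℝ)^k := by ring
          _ ≤ t * (2:ℝ)^k := mul_le_mul_of_nonneg_right h1 h2.le
      · calc t * (2:ℝ)^k < ((c:ℝ) * (2:ℝ)^(-k) + (2:ℝ)^(-k)) * (2:ℝ)^k :=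
              mul_lt_mul_of_pos_right h2' h2
          _ = (c:ℝ) * ((2:ℝ)^(-k) * (2:ℝ)^k) + ((2:ℝ)^(-k) * (2:ℝ)^k) := by ring
          _ = (c:ℝ) + 1 := by rw [hinv, mul_one]
    · rintro ⟨h1, h2'⟩
      constructor
      · calc (c:ℝ) * (2:ℝ)^(-k) ≤ t * (2:ℝ)^k * (2:ℝ)^(-k) :=
              mul_le_mul_of_nonneg_right h1 hpos.le
          _ = t * ((2:ℝ)^k * (2:ℝ)^(-k)) := by ring
          _ = t := by rw [hinv', mul_one]
      · calc t = t * ((2:ℝ)^k * (2:ℝ)^(-k)) := by rw [hinv', mul_one]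
          _ = t * (2:ℝ)^k * (2:ℝ)^(-k) := by ring
          _ < ((c:ℝ) + 1) * (2:ℝ)^(-k) := mul_lt_mul_of_pos_right h2' hpos
          _ = (c:ℝ) * (2:ℝ)^(-k) + (2:ℝ)^(-k) := by ring
  constructor
  · intro hx i
    have := (key (mv i) (x i)).1 (hx i)
    exact ((Int.floor_eq_iff).2 this).symm
  · intro hmv i
    refine (key (mv i) (x i)).2 ?_
    rw [hmv i]
    exact ⟨Int.floor_le _, Int.lt_floor_add_one _⟩

lemma mem_dyadicCube_floor (x : Fin n → ℝ) (k : ℤ) :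
    x ∈ dyadicCube k (fun i => ⌊x i * (2:ℝ) ^ k⌋) :=
  mem_dyadicCube_iff.2 fun _ => rfl

lemma lintegral_le_Lp (Q : Set (Fin n → ℝ)) (h : (Fin n → ℝ) → ℝ≥0∞) {P : ℝ} (hP : 1 < P) :
    (∫⁻ y in Q, h y) ≤ (∫⁻ y in Q, h y ^ P) ^ (1/P) * volume Q ^ (1 - 1/P) := by
  obtain ⟨g, hgm, hgle, hgeq⟩ := exists_measurable_le_lintegral_eq (volume.restrict Q) h
  rw [hgeq]
  have hpq := Real.HolderConjugate.conjExponent hP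
  set q := Real.conjExponent P with hq
  have key := ENNReal.lintegral_mul_le_Lp_mul_Lq (volume.restrict Q) hpq
    hgm.aemeasurable (aemeasurable_const (b := (1:ℝ≥0∞)))
  have h1 : (∫⁻ a in Q, (g * fun (_ : Fin n → ℝ) => (1:ℝ≥0∞)) a) = ∫⁻ a in Q, g a := by
    simp [Pi.mul_apply]
  have h2 : (∫⁻ (_ : Fin n → ℝ) in Q, (1:ℝ≥0∞) ^ q) = volume Q := by
    simp [ENNReal.one_rpow]
  rw [h1, h2] at key
  have h3 : 1 / q = 1 - 1 / P := by
    rw [one_div, one_div, ← hpq.one_sub_inv]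
  rw [h3] at key
  refine key.trans (mul_le_mul_left ?_ _)
  refine ENNReal.rpow_le_rpow ?_ (by positivity)
  exact lintegral_mono fun y => ENNReal.rpow_le_rpow (hgle y) (le_of_lt (lt_trans one_pos hP))

lemma rpow_finset_sum {x : ℝ≥0∞} (hx : x ≠ 0) (hx' : x ≠ ⊤) {ι : Type*} (s : Finset ι)
    (c : ι → ℝ) : x ^ (∑ i ∈ s, c i) = ∏ i ∈ s, x ^ c i := by
  induction s using Finset.cons_induction with
  | empty => simp
  | cons a s ha ih => rw [Finset.sum_cons, Finset.prod_cons, ENNReal.rpow_add _ _ hx hx', ih]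

lemma ell_rpow (k : ℤ) (c : ℝ) :
    ENNReal.ofReal ((2:ℝ) ^ (-k)) ^ c = ENNReal.ofReal ((2:ℝ) ^ (-(k:ℝ) * c)) := by
  rw [ENNReal.ofReal_rpow_of_pos (by positivity)]
  congr 1
  rw [show ((2:ℝ) ^ (-k)) = (2:ℝ) ^ ((-k : ℤ) : ℝ) from (Real.rpow_intCast 2 (-k)).symm,
    ← Real.rpow_mul (by norm_num)]
  push_cast
  ring_nf


theorem statement7 (hn : 0 < n) (m : ℕ) (hm : 0 < m)
    (P : Fin m → ℝ) (hP : ∀ j, 1 < P j) (p p0 α β : ℝ)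
    (hp : 1 / p = ∑ j, 1 / P j)
    (hβ : 0 < β) (hβα : β < α) (hα : α < (m : ℝ) * n)
    (hp0 : 0 < p0) (hp0n : p0 < n / α) :
    ∃ C : ℝ≥0∞, 0 < C ∧ C < ∞ ∧
      ∀ f : Fin m → (Fin n → ℝ) → ℝ, prodMorreyNorm P p p0 f = 1 →
        ∀ x : Fin n → ℝ,
          dyadicFracIntegral α f x ≤
            C * dyadicFracMaximal β f x ^ ((n - α * p0) / (n - β * p0)) := by
  have hα0 : 0 < α := hβ.trans hβα
  have hn' : (0:ℝ) < n := by exact_mod_cast hn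
  have hαp0 : α * p0 < n := by
    have := (lt_div_iff₀ hα0).1 hp0n
    linarith
  have hβp0 : β * p0 < α * p0 := by nlinarith
  have hnα : (0:ℝ) < n - α * p0 := by linarith
  have hnβ : (0:ℝ) < n - β * p0 := by linarith
  set θ : ℝ := (n - α * p0) / (n - β * p0) with hθdef
  have hθpos : 0 < θ := div_pos hnα hnβ
  set a' : ℝ := α - β with ha'def
  have ha' : 0 < a' := by simp [ha'def]; linarith
  set b : ℝ := n / p0 - α with hbdef
  have hb : 0 < b := by
    have : α < n / p0 := (lt_div_iff₀ hp0).2 (by linarith)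
    simp [hbdef]; linarith
  set w1 : ℝ≥0∞ := ENNReal.ofReal ((2:ℝ) ^ (-a')) with hw1def
  set w2 : ℝ≥0∞ := ENNReal.ofReal ((2:ℝ) ^ (-b)) with hw2def
  have hw1 : w1 < 1 := by
    rw [hw1def, ← ENNReal.ofReal_one]
    exact (ENNReal.ofReal_lt_ofReal_iff one_pos).2
      (Real.rpow_lt_one_of_one_lt_of_neg one_lt_two (by linarith))
  have hw2 : w2 < 1 := by
    rw [hw2def, ← ENNReal.ofReal_one]
    exact (ENNReal.ofReal_lt_ofReal_iff one_pos).2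
      (Real.rpow_lt_one_of_one_lt_of_neg one_lt_two (by linarith))
  have hs1 : (1 : ℝ≥0∞) - w1 ≠ 0 := (tsub_pos_of_lt hw1).ne'
  have hs2 : (1 : ℝ≥0∞) - w2 ≠ 0 := (tsub_pos_of_lt hw2).ne'
  refine ⟨(1 - w1)⁻¹ + (1 - w2)⁻¹, ?_, ?_, ?_⟩
  · exact lt_of_lt_of_le (ENNReal.inv_pos.2 (tsub_le_self.trans_lt one_lt_top).ne) le_self_add
  · exact ENNReal.add_lt_top.2 ⟨ENNReal.inv_lt_top.2 (tsub_pos_of_lt hw1),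
      ENNReal.inv_lt_top.2 (tsub_pos_of_lt hw2)⟩
  intro f hnorm x
  set mv0 : ℤ → Fin n → ℤ := fun k i => ⌊x i * (2:ℝ) ^ k⌋ with hmv0
  set Qk : ℤ → Set (Fin n → ℝ) := fun k => dyadicCube k (mv0 k) with hQk
  set T : ℤ → ℝ≥0∞ := fun k => ENNReal.ofReal ((2:ℝ) ^ (-k)) ^ (α - (m:ℝ) * n) *
    ∏ j, ∫⁻ y in Qk k, ENNReal.ofReal |f j y| with hT
  set M := dyadicFracMaximal β f x with hMdef
  have hIeq : dyadicFracIntegral α f x = ∑' k, T k := by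
    rw [dyadicFracIntegral, ENNReal.tsum_prod']
    refine tsum_congr fun k => ?_
    rw [tsum_eq_single (mv0 k) ?_]
    · rw [Set.indicator_of_mem (mem_dyadicCube_floor x k)]
    · intro mv hmv
      rw [Set.indicator_of_notMem]
      intro hx
      exact hmv (funext fun i => mem_dyadicCube_iff.1 hx i)
  have hℓ0 : ∀ k : ℤ, ENNReal.ofReal ((2:ℝ) ^ (-k)) ≠ 0 := fun k =>
    (ENNReal.ofReal_pos.2 (by positivity)).ne'
  have hℓt : ∀ k : ℤ, ENNReal.ofReal ((2:ℝ) ^ (-k)) ≠ ⊤ := fun k => ENNReal.ofReal_ne_top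
  have hT1 : ∀ k, T k ≤ ENNReal.ofReal ((2:ℝ) ^ (-k)) ^ a' * M := by
    intro k
    have hsplit : ENNReal.ofReal ((2:ℝ) ^ (-k)) ^ (α - (m:ℝ) * n) =
        ENNReal.ofReal ((2:ℝ) ^ (-k)) ^ a' * ENNReal.ofReal ((2:ℝ) ^ (-k)) ^ (β - (m:ℝ) * n) := by
      rw [← ENNReal.rpow_add _ _ (hℓ0 k) (hℓt k)]
      congr 1
      rw [ha'def]; ring
    simp only [hT, hsplit]
    simp only [mul_assoc]
    refine mul_le_mul_right ?_ _
    rw [hMdef, dyadicFracMaximal]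
    exact le_iSup_of_le k (le_iSup_of_le (mv0 k)
      (le_iSup_of_le (mem_dyadicCube_floor x k) le_rfl))
  have hT2 : ∀ k, T k ≤ ENNReal.ofReal ((2:ℝ) ^ (-k)) ^ (-b) := by
    intro k
    have hr : (0:ℝ) < (2:ℝ) ^ (-k) := by positivity
    have hvol : volume (Qk k) = ENNReal.ofReal ((2:ℝ) ^ (-k)) ^ (n:ℝ) := by
      rw [hQk]
      show volume (dyadicCube k (mv0 k)) = _
      rw [dyadicCube, volume_cube, ← ENNReal.rpow_natCast]
    set V := volume (Qk k) with hV
    have hV0 : V ≠ 0 := by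
      rw [hvol]
      exact (ENNReal.rpow_pos (ENNReal.ofReal_pos.2 hr) (hℓt k)).ne'
    have hVt : V ≠ ⊤ := by
      rw [hvol]
      exact ENNReal.rpow_ne_top_of_nonneg (by positivity) (hℓt k)
    set A : Fin m → ℝ≥0∞ :=
      fun j => (∫⁻ y in Qk k, ENNReal.ofReal |f j y| ^ P j) ^ (1 / P j) with hA
    have hmorrey : V ^ (1 / p0 - 1 / p) * ∏ j, A j ≤ 1 := by
      rw [← hnorm, prodMorreyNorm]
      exact le_iSup_of_le (fun i => (mv0 k i : ℝ) * (2:ℝ) ^ (-k))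
        (le_iSup_of_le ((2:ℝ) ^ (-k)) (le_iSup_of_le hr le_rfl))
    have hprodA : ∏ j, A j ≤ V ^ (1 / p - 1 / p0) := by
      have h1 := mul_le_mul_right hmorrey (V ^ (1 / p - 1 / p0))
      rw [mul_one, ← mul_assoc, ← ENNReal.rpow_add _ _ hV0 hVt,
        show (1 / p - 1 / p0) + (1 / p0 - 1 / p) = 0 by ring, ENNReal.rpow_zero, one_mul] at h1
      exact h1
    have holder : ∀ j, (∫⁻ y in Qk k, ENNReal.ofReal |f j y|) ≤ A j * V ^ (1 - 1 / P j) :=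
      fun j => lintegral_le_Lp (Qk k) _ (hP j)
    have hPk : (∏ j, ∫⁻ y in Qk k, ENNReal.ofReal |f j y|) ≤ V ^ ((m:ℝ) - 1 / p0) := by
      calc (∏ j, ∫⁻ y in Qk k, ENNReal.ofReal |f j y|)
          ≤ ∏ j, (A j * V ^ (1 - 1 / P j)) := Finset.prod_le_prod' fun j _ => holder j
        _ = (∏ j, A j) * ∏ j, V ^ (1 - 1 / P j) := Finset.prod_mul_distrib
        _ = (∏ j, A j) * V ^ (∑ j, (1 - 1 / P j)) := by
            rw [← rpow_finset_sum hV0 hVt]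
        _ ≤ V ^ (1 / p - 1 / p0) * V ^ ((m:ℝ) - 1 / p) := by
            have hsum : ∑ j, (1 - 1 / P j) = (m:ℝ) - 1 / p := by
              rw [Finset.sum_sub_distrib, hp]
              simp
            rw [hsum]
            exact mul_le_mul_left hprodA _
        _ = V ^ ((m:ℝ) - 1 / p0) := by
            rw [← ENNReal.rpow_add _ _ hV0 hVt]
            congr 1; ring
    calc T k ≤ ENNReal.ofReal ((2:ℝ) ^ (-k)) ^ (α - (m:ℝ) * n) * V ^ ((m:ℝ) - 1 / p0) :=
          mul_le_mul_right hPk _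
      _ = ENNReal.ofReal ((2:ℝ) ^ (-k)) ^ (-b) := by
          rw [hvol, ← ENNReal.rpow_mul,
            ← ENNReal.rpow_add _ _ (hℓ0 k) (hℓt k)]
          congr 1
          rw [hbdef]
          push_cast
          ring
  have hCne : ((1:ℝ≥0∞) - w1)⁻¹ + (1 - w2)⁻¹ ≠ 0 :=
    fun h => by
      have h1 : ((1:ℝ≥0∞) - w1)⁻¹ ≠ 0 := ENNReal.inv_ne_zero.2 (tsub_le_self.trans_lt one_lt_top).ne
      exact h1 (by simpa using (add_eq_zero.1 h).1)
  rcases eq_or_ne M 0 with hM0 | hM0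
  · have hTz : ∀ k, T k = 0 := fun k =>
      le_antisymm (by simpa [hM0] using hT1 k) zero_le
    rw [hIeq]
    simp [hTz]
  rcases eq_or_ne M ⊤ with hMt | hMt
  · rw [hMt, ENNReal.top_rpow_of_pos hθpos, ENNReal.mul_top hCne]
    exact le_top
  have hu : 0 < M.toReal := ENNReal.toReal_pos hM0 hMt
  set u := M.toReal with hudef
  set c : ℝ := -(p0 / (n - β * p0)) with hcdef
  set t : ℝ := u ^ c with htdef
  have ht : 0 < t := Real.rpow_pos_of_pos hu _
  obtain ⟨z, hz1, hz2⟩ := exists_mem_Ico_zpow ht one_lt_two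
  set K : ℤ := -z with hKdef
  have hMe : ∀ e : ℝ, ENNReal.ofReal (u ^ e) = M ^ e := fun e => by
    rw [← ENNReal.ofReal_rpow_of_pos hu, ENNReal.ofReal_toReal hMt]
  set g : ℤ → ℝ≥0∞ := fun k => if K ≤ k then ENNReal.ofReal ((2:ℝ) ^ (-k)) ^ a' * M
    else ENNReal.ofReal ((2:ℝ) ^ (-k)) ^ (-b) with hg
  have hTg : ∀ k, T k ≤ g k := fun k => by
    rw [hg]; dsimp only; split_ifs
    exacts [hT1 k, hT2 k]
  have e1 : ∀ j : ℕ, g ((j:ℤ) + K) =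
      (ENNReal.ofReal ((2:ℝ) ^ ((z:ℝ) * a')) * M) * w1 ^ j := by
    intro j
    rw [hg]; dsimp only
    rw [if_pos (le_add_of_nonneg_left (by positivity)), ell_rpow]
    have hexp : -(((j:ℤ) + K : ℤ) : ℝ) * a' = (z:ℝ) * a' + (-a') * (j:ℕ) := by
      rw [hKdef]; push_cast; ring
    rw [hexp, Real.rpow_add two_pos, ENNReal.ofReal_mul (by positivity)]
    have h2 : (2:ℝ) ^ ((-a') * (j:ℕ)) = ((2:ℝ) ^ (-a')) ^ (j:ℕ) := by
      rw [Real.rpow_mul (by norm_num : (0:ℝ) ≤ 2), Real.rpow_natCast]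
    rw [h2, ENNReal.ofReal_pow (by positivity), ← hw1def]
    ring
  have e2 : ∀ j : ℕ, g (-((j:ℤ) + 1) + K) =
      ENNReal.ofReal ((2:ℝ) ^ (-(((z:ℝ) + 1) * b))) * w2 ^ j := by
    intro j
    rw [hg]; dsimp only
    rw [if_neg (by omega), ell_rpow]
    have hexp : -((-((j:ℤ) + 1) + K : ℤ) : ℝ) * (-b) = -(((z:ℝ) + 1) * b) + (-b) * (j:ℕ) := by
      rw [hKdef]; push_cast; ring
    rw [hexp, Real.rpow_add two_pos, ENNReal.ofReal_mul (by positivity)]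
    have h2 : (2:ℝ) ^ ((-b) * (j:ℕ)) = ((2:ℝ) ^ (-b)) ^ (j:ℕ) := by
      rw [Real.rpow_mul (by norm_num : (0:ℝ) ≤ 2), Real.rpow_natCast]
    rw [h2, ENNReal.ofReal_pow (by positivity), ← hw2def]
  have hsplitsum : ∑' k : ℤ, g k =
      (ENNReal.ofReal ((2:ℝ) ^ ((z:ℝ) * a')) * M) * (1 - w1)⁻¹ +
        ENNReal.ofReal ((2:ℝ) ^ (-(((z:ℝ) + 1) * b))) * (1 - w2)⁻¹ := by
    rw [← ((Equiv.addRight K).tsum_eq g),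
      ← tsum_nat_add_neg_add_one ENNReal.summable]
    simp only [Equiv.coe_addRight]
    rw [ENNReal.tsum_add]
    congr 1
    · rw [tsum_congr e1, ENNReal.tsum_mul_left, ENNReal.tsum_geometric]
    · rw [tsum_congr e2, ENNReal.tsum_mul_left, ENNReal.tsum_geometric]
  have hbound1 : ENNReal.ofReal ((2:ℝ) ^ ((z:ℝ) * a')) * M ≤ M ^ θ := by
    have hle : (2:ℝ) ^ ((z:ℝ) * a') ≤ t ^ a' := by
      rw [Real.rpow_mul (by norm_num : (0:ℝ) ≤ 2)]
      refine Real.rpow_le_rpow (by positivity) ?_ ha'.le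
      rw [Real.rpow_intCast]
      exact hz1
    have ht' : t ^ a' = u ^ (c * a') := by
      rw [htdef, ← Real.rpow_mul hu.le]
    calc ENNReal.ofReal ((2:ℝ) ^ ((z:ℝ) * a')) * M ≤ ENNReal.ofReal (t ^ a') * M :=
          mul_le_mul_left (ENNReal.ofReal_le_ofReal hle) M
      _ = M ^ (c * a') * M ^ (1:ℝ) := by rw [ht', hMe, ENNReal.rpow_one]
      _ = M ^ (c * a' + 1) := by rw [← ENNReal.rpow_add _ _ hM0 hMt]
      _ = M ^ θ := by
          congr 1
          rw [hcdef, ha'def, hθdef]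
          have hD : (n:ℝ) - β * p0 ≠ 0 := hnβ.ne'
          have hX : p0 / ((n:ℝ) - β * p0) * ((n:ℝ) - β * p0) = p0 := div_mul_cancel₀ _ hD
          rw [eq_div_iff hD]
          linear_combination (-(α - β)) * hX
  have hbound2 : ENNReal.ofReal ((2:ℝ) ^ (-(((z:ℝ) + 1) * b))) ≤ M ^ θ := by
    have hle : (2:ℝ) ^ (-(((z:ℝ) + 1) * b)) ≤ t ^ (-b) := by
      rw [Real.rpow_neg ht.le, Real.rpow_neg (by norm_num : (0:ℝ) ≤ 2)]
      refine inv_anti₀ (Real.rpow_pos_of_pos ht b) ?_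
      rw [Real.rpow_mul (by norm_num : (0:ℝ) ≤ 2)]
      refine Real.rpow_le_rpow ht.le ?_ hb.le
      have hz' : ((z:ℝ) + 1) = (((z + 1 : ℤ)) : ℝ) := by push_cast; ring
      rw [hz', Real.rpow_intCast]
      exact hz2.le
    have ht' : t ^ (-b) = u ^ (c * (-b)) := by
      rw [htdef, ← Real.rpow_mul hu.le]
    calc ENNReal.ofReal ((2:ℝ) ^ (-(((z:ℝ) + 1) * b))) ≤ ENNReal.ofReal (t ^ (-b)) :=
          ENNReal.ofReal_le_ofReal hle
      _ = M ^ (c * (-b)) := by rw [ht', hMe]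
      _ = M ^ θ := by
          congr 1
          rw [hcdef, hbdef, hθdef]
          field_simp
  calc dyadicFracIntegral α f x = ∑' k, T k := hIeq
    _ ≤ ∑' k, g k := ENNReal.tsum_le_tsum hTg
    _ = (ENNReal.ofReal ((2:ℝ) ^ ((z:ℝ) * a')) * M) * (1 - w1)⁻¹ +
        ENNReal.ofReal ((2:ℝ) ^ (-(((z:ℝ) + 1) * b))) * (1 - w2)⁻¹ := hsplitsum
    _ ≤ M ^ θ * (1 - w1)⁻¹ + M ^ θ * (1 - w2)⁻¹ :=
        add_le_add (mul_le_mul_left hbound1 _) (mul_le_mul_left hbound2 _)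
    _ = ((1 - w1)⁻¹ + (1 - w2)⁻¹) * M ^ θ := by ring
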